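/- Let 1 ≤ d₁ ≤ n and 0 ≤ d₂ ≤ n. Let X be an n×d₁ real matrix of full column rank and V a d₂-dimensional subspace of ℝⁿ with orthogonal projector P_V. Then the maximal generalized Rayleigh quotient max_{v ≠ 0} (vᵀ Xᵀ(I − P_V)X v)/(vᵀ XᵀX v) equals ‖P_{col(X)}(I − P_V)‖². In particular, if d₁ ≤ d₂ it equals ‖sin∠(col(X), V)‖², and if d₁ > d₂ it equals 1. -/

import Mathlib

noncomputable section
open Matrix RealInnerProductSpace

/-- Orthogonal projector onto a subspace, as a continuous linear map on the whole space. -/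
noncomputable def projCLM {ι : Type*} [Fintype ι] (W : Submodule ℝ (EuclideanSpace ℝ ι)) :
    EuclideanSpace ℝ ι →L[ℝ] EuclideanSpace ℝ ι :=
  W.subtypeL.comp (W.orthogonalProjection)

/-- The largest sine of canonical angles, ‖sin∠(V,W)‖ = ‖P_V (I − P_W)‖. -/
noncomputable def sinAngle {ι : Type*} [Fintype ι]
    (V W : Submodule ℝ (EuclideanSpace ℝ ι)) : ℝ :=
  ‖(projCLM V).comp (ContinuousLinearMap.id ℝ (EuclideanSpace ℝ ι) - projCLM W)‖

/-- Column space of a matrix, as a subspace of Euclidean space. -/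
noncomputable def colSpaceE {ι κ : Type*} [Fintype ι] [Fintype κ] [DecidableEq κ]
    (M : Matrix ι κ ℝ) : Submodule ℝ (EuclideanSpace ℝ ι) :=
  LinearMap.range (Matrix.toEuclideanLin M)

/-! ### Auxiliary lemmas -/

lemma projCLM_norm_le {ι : Type*} [Fintype ι] (W : Submodule ℝ (EuclideanSpace ℝ ι)) :
    ‖projCLM W‖ ≤ 1 := by
  refine ContinuousLinearMap.opNorm_le_bound _ zero_le_one fun x => ?_
  rw [one_mul]
  calc ‖projCLM W x‖ = ‖W.orthogonalProjectionOnto x‖ := rfl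
    _ ≤ ‖(W.orthogonalProjectionOnto : _)‖ * ‖x‖ := (W.orthogonalProjectionOnto).le_opNorm x
    _ ≤ 1 * ‖x‖ := by gcongr; exact Submodule.orthogonalProjectionOnto_norm_le (K := W)
    _ = ‖x‖ := one_mul _

lemma projCLM_apply_norm_le {ι : Type*} [Fintype ι] (W : Submodule ℝ (EuclideanSpace ℝ ι)) (x) :
    ‖projCLM W x‖ ≤ ‖x‖ := by
  calc ‖projCLM W x‖ = ‖W.orthogonalProjectionOnto x‖ := rfl
    _ ≤ ‖(W.orthogonalProjectionOnto : _)‖ * ‖x‖ := (W.orthogonalProjectionOnto).le_opNorm x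
    _ ≤ 1 * ‖x‖ := by gcongr; exact Submodule.orthogonalProjectionOnto_norm_le (K := W)
    _ = ‖x‖ := one_mul _

lemma projCLM_apply_of_mem {ι : Type*} [Fintype ι] {W : Submodule ℝ (EuclideanSpace ℝ ι)} {x}
    (hx : x ∈ W) : projCLM W x = x := by
  exact (Submodule.starProjection_eq_self_iff (K := W)).mpr hx

lemma projCLM_apply_of_mem_orthogonal {ι : Type*} [Fintype ι]
    {W : Submodule ℝ (EuclideanSpace ℝ ι)} {x} (hx : x ∈ Wᗮ) : projCLM W x = 0 := by
  simp [projCLM, Submodule.orthogonalProjectionOnto_apply_of_mem_orthogonal hx]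

lemma Q_apply {ι : Type*} [Fintype ι] (V : Submodule ℝ (EuclideanSpace ℝ ι)) (x) :
    (ContinuousLinearMap.id ℝ (EuclideanSpace ℝ ι) - projCLM V) x = x - projCLM V x := rfl

lemma Q_mem_orthogonal {ι : Type*} [Fintype ι] (V : Submodule ℝ (EuclideanSpace ℝ ι)) (x) :
    (ContinuousLinearMap.id ℝ (EuclideanSpace ℝ ι) - projCLM V) x ∈ Vᗮ := by
  rw [Q_apply]
  exact Submodule.sub_starProjection_mem_orthogonal (K := V) x

lemma inner_Q {ι : Type*} [Fintype ι] (V : Submodule ℝ (EuclideanSpace ℝ ι)) (x) :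
    ⟪x, (ContinuousLinearMap.id ℝ (EuclideanSpace ℝ ι) - projCLM V) x⟫
    = ‖(ContinuousLinearMap.id ℝ (EuclideanSpace ℝ ι) - projCLM V) x‖ ^ 2 := by
  set Qx := (ContinuousLinearMap.id ℝ (EuclideanSpace ℝ ι) - projCLM V) x with hQx
  have hmem : Qx ∈ Vᗮ := Q_mem_orthogonal V x
  have hx : x = projCLM V x + Qx := by rw [hQx, Q_apply]; abel
  have h0 : ⟪projCLM V x, Qx⟫ = 0 :=
    Submodule.inner_right_of_mem_orthogonal (K := V) (V.orthogonalProjectionOnto x).2 hmem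
  rw [← real_inner_self_eq_norm_sq]
  conv_lhs => rw [hx]
  rw [inner_add_left, h0, zero_add]

lemma Q_apply_norm_le {ι : Type*} [Fintype ι] (V : Submodule ℝ (EuclideanSpace ℝ ι)) (x) :
    ‖(ContinuousLinearMap.id ℝ (EuclideanSpace ℝ ι) - projCLM V) x‖ ≤ ‖x‖ := by
  set Qx := (ContinuousLinearMap.id ℝ (EuclideanSpace ℝ ι) - projCLM V) x with hQx
  have h := inner_Q V x
  have hcs := real_inner_le_norm x Qx
  nlinarith [norm_nonneg Qx, norm_nonneg x]

lemma Q_norm_le {ι : Type*} [Fintype ι] (V : Submodule ℝ (EuclideanSpace ℝ ι)) :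
    ‖ContinuousLinearMap.id ℝ (EuclideanSpace ℝ ι) - projCLM V‖ ≤ 1 :=
  ContinuousLinearMap.opNorm_le_bound _ zero_le_one fun x => by
    simpa [one_mul] using Q_apply_norm_le V x

lemma adjoint_PQ {ι : Type*} [Fintype ι] (V C : Submodule ℝ (EuclideanSpace ℝ ι)) :
    ContinuousLinearMap.adjoint ((projCLM C).comp
      (ContinuousLinearMap.id ℝ (EuclideanSpace ℝ ι) - projCLM V))
    = (ContinuousLinearMap.id ℝ (EuclideanSpace ℝ ι) - projCLM V).comp (projCLM C) := by
  have hV : ContinuousLinearMap.adjoint (projCLM V) = projCLM V :=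
    (isSelfAdjoint_starProjection V).adjoint_eq
  have hC : ContinuousLinearMap.adjoint (projCLM C) = projCLM C :=
    (isSelfAdjoint_starProjection C).adjoint_eq
  rw [ContinuousLinearMap.adjoint_comp, map_sub, ContinuousLinearMap.adjoint_id, hV, hC]

lemma norm_PQ_eq {ι : Type*} [Fintype ι] (V C : Submodule ℝ (EuclideanSpace ℝ ι)) :
    ‖(projCLM C).comp (ContinuousLinearMap.id ℝ (EuclideanSpace ℝ ι) - projCLM V)‖
    = ‖(ContinuousLinearMap.id ℝ (EuclideanSpace ℝ ι) - projCLM V).comp (projCLM C)‖ := by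
  rw [← adjoint_PQ]
  exact (LinearIsometryEquiv.norm_map ContinuousLinearMap.adjoint _).symm

lemma mulVecLin_inj {n d : ℕ} (X : Matrix (Fin n) (Fin d) ℝ) (hrank : X.rank = d) :
    Function.Injective X.mulVecLin := by
  rw [← LinearMap.ker_eq_bot]
  have h := X.mulVecLin.finrank_range_add_finrank_ker
  rw [Matrix.rank] at hrank
  simp only [Module.finrank_pi, Fintype.card_fin] at h
  rw [hrank] at h
  have : Module.finrank ℝ (LinearMap.ker X.mulVecLin) = 0 := by omega
  exact Submodule.finrank_eq_zero.mp this

lemma toEuclideanLin_inj {n d : ℕ} (X : Matrix (Fin n) (Fin d) ℝ) (hrank : X.rank = d) :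
    Function.Injective (Matrix.toEuclideanLin X) := by
  intro a b hab
  have h1 : ∀ v : EuclideanSpace ℝ (Fin d), Matrix.toEuclideanLin X v
      = (WithLp.equiv 2 (Fin n → ℝ)).symm (X.mulVecLin ((WithLp.equiv 2 (Fin d → ℝ)) v)) :=
    fun v => rfl
  rw [h1, h1] at hab
  have := mulVecLin_inj X hrank ((WithLp.equiv 2 (Fin n → ℝ)).symm.injective hab)
  exact (WithLp.equiv 2 (Fin d → ℝ)).injective this

lemma finrank_colSpaceE {n d : ℕ} (X : Matrix (Fin n) (Fin d) ℝ) (hrank : X.rank = d) :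
    Module.finrank ℝ (colSpaceE X) = d := by
  rw [colSpaceE, LinearMap.finrank_range_of_inj (toEuclideanLin_inj X hrank)]
  simp

lemma exists_norm_comp_proj_eq {n : ℕ} (C : Submodule ℝ (EuclideanSpace ℝ (Fin n)))
    (hC : C ≠ ⊥) (Q : EuclideanSpace ℝ (Fin n) →L[ℝ] EuclideanSpace ℝ (Fin n)) :
    ∃ y₀, y₀ ∈ C ∧ ‖y₀‖ = 1 ∧ ‖Q.comp (projCLM C)‖ = ‖Q y₀‖ := by
  set S : Set (EuclideanSpace ℝ (Fin n)) := Metric.sphere 0 1 ∩ (C : Set _) with hS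
  have hclosed : IsClosed (C : Set (EuclideanSpace ℝ (Fin n))) :=
    Submodule.closed_of_finiteDimensional C
  have hcpt : IsCompact S := (isCompact_sphere 0 1).inter_right hclosed
  have hne : S.Nonempty := by
    obtain ⟨x, hxC, hx0⟩ := Submodule.exists_mem_ne_zero_of_ne_bot hC
    refine ⟨‖x‖⁻¹ • x, ?_, C.smul_mem _ hxC⟩
    rw [mem_sphere_zero_iff_norm]
    exact norm_smul_inv_norm hx0
  obtain ⟨y₀, hy₀S, hmax⟩ := hcpt.exists_isMaxOn hne (Q.continuous.norm.continuousOn)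
  obtain ⟨hy₀sph, hy₀C⟩ := hy₀S
  have hy₀n : ‖y₀‖ = 1 := mem_sphere_zero_iff_norm.mp hy₀sph
  refine ⟨y₀, hy₀C, hy₀n, le_antisymm ?_ ?_⟩
  · refine ContinuousLinearMap.opNorm_le_bound _ (norm_nonneg _) fun x => ?_
    set y := projCLM C x with hy
    have hyC : y ∈ C := (C.orthogonalProjectionOnto x).2
    have hyx : ‖y‖ ≤ ‖x‖ := projCLM_apply_norm_le C x
    by_cases hy0 : y = 0
    · simp only [ContinuousLinearMap.comp_apply, ← hy, hy0, map_zero, norm_zero]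
      positivity
    · have huS : ‖y‖⁻¹ • y ∈ S :=
        ⟨mem_sphere_zero_iff_norm.mpr (norm_smul_inv_norm hy0), C.smul_mem _ hyC⟩
      have h1 : ‖Q (‖y‖⁻¹ • y)‖ ≤ ‖Q y₀‖ := hmax huS
      rw [_root_.map_smul, norm_smul, norm_inv, norm_norm] at h1
      have hyn : (0:ℝ) < ‖y‖ := norm_pos_iff.mpr hy0
      calc ‖(Q.comp (projCLM C)) x‖ = ‖Q y‖ := rfl
        _ ≤ ‖Q y₀‖ * ‖y‖ := by
            rw [inv_mul_le_iff₀ hyn] at h1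
            linarith [h1]
        _ ≤ ‖Q y₀‖ * ‖x‖ := by
            have : (0:ℝ) ≤ ‖Q y₀‖ := norm_nonneg _
            nlinarith
  · calc ‖Q y₀‖ = ‖(Q.comp (projCLM C)) y₀‖ := by
          rw [ContinuousLinearMap.comp_apply, projCLM_apply_of_mem hy₀C]
      _ ≤ ‖Q.comp (projCLM C)‖ * ‖y₀‖ := ContinuousLinearMap.le_opNorm _ _
      _ = ‖Q.comp (projCLM C)‖ := by rw [hy₀n, mul_one]

/-- For a full-column-rank n×d₁ matrix X and a d₂-dimensional subspace V of ℝⁿ,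
the maximum of v ↦ (vᵀXᵀ(I − P_V)Xv)/(vᵀXᵀXv) over v ≠ 0 equals
‖P_{col X}(I − P_V)‖²; if d₁ ≤ d₂ this is ‖sin∠(col X, V)‖², and if d₁ > d₂ it is 1. -/
theorem rayleigh_max_eq_sin_sq {n d₁ d₂ : ℕ} (hd₁ : 1 ≤ d₁) (hd₁n : d₁ ≤ n) (hd₂n : d₂ ≤ n)
    (X : Matrix (Fin n) (Fin d₁) ℝ) (hrank : X.rank = d₁)
    (V : Submodule ℝ (EuclideanSpace ℝ (Fin n))) (hV : Module.finrank ℝ V = d₂) :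
    IsGreatest
      {r : ℝ | ∃ v : EuclideanSpace ℝ (Fin d₁), v ≠ 0 ∧
        r = ⟪Matrix.toEuclideanLin X v,
              (ContinuousLinearMap.id ℝ (EuclideanSpace ℝ (Fin n)) - projCLM V)
                (Matrix.toEuclideanLin X v)⟫ /
            ⟪Matrix.toEuclideanLin X v, Matrix.toEuclideanLin X v⟫}
      (‖(projCLM (colSpaceE X)).comp
          (ContinuousLinearMap.id ℝ (EuclideanSpace ℝ (Fin n)) - projCLM V)‖ ^ 2) ∧
    (d₁ ≤ d₂ →
      ‖(projCLM (colSpaceE X)).comp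
          (ContinuousLinearMap.id ℝ (EuclideanSpace ℝ (Fin n)) - projCLM V)‖ ^ 2
        = sinAngle (colSpaceE X) V ^ 2) ∧
    (d₂ < d₁ →
      ‖(projCLM (colSpaceE X)).comp
          (ContinuousLinearMap.id ℝ (EuclideanSpace ℝ (Fin n)) - projCLM V)‖ ^ 2 = 1) := by
  set C := colSpaceE X with hCdef
  set Q := ContinuousLinearMap.id ℝ (EuclideanSpace ℝ (Fin n)) - projCLM V with hQdef
  have hC1 : Module.finrank ℝ C = d₁ := finrank_colSpaceE X hrank
  have hCbot : C ≠ ⊥ := by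
    intro hbot
    rw [hbot, finrank_bot] at hC1
    omega
  have hAB : ‖(projCLM C).comp Q‖ = ‖Q.comp (projCLM C)‖ := norm_PQ_eq V C
  obtain ⟨y₀, hy₀C, hy₀n, hBn⟩ := exists_norm_comp_proj_eq C hCbot Q
  have hAn : ‖(projCLM C).comp Q‖ = ‖Q y₀‖ := hAB.trans hBn
  refine ⟨⟨?_, ?_⟩, fun _ => rfl, fun h => ?_⟩
  · -- membership
    obtain ⟨v₀, hv₀⟩ := hy₀C
    have hv₀0 : v₀ ≠ 0 := by
      intro h0
      rw [h0, map_zero] at hv₀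
      rw [← hv₀, norm_zero] at hy₀n
      norm_num at hy₀n
    refine ⟨v₀, hv₀0, ?_⟩
    rw [hv₀, inner_Q, real_inner_self_eq_norm_sq, hy₀n, hAn, one_pow, div_one]
  · -- upper bound
    rintro r ⟨v, hv, rfl⟩
    set y := Matrix.toEuclideanLin X v with hydef
    have hyC : y ∈ C := ⟨v, rfl⟩
    have hy0 : y ≠ 0 := fun h0 => hv (toEuclideanLin_inj X hrank (by rw [← hydef, h0, map_zero]))
    have hyn : (0:ℝ) < ‖y‖ := norm_pos_iff.mpr hy0
    rw [inner_Q, real_inner_self_eq_norm_sq]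
    have hQy : ‖Q y‖ ≤ ‖Q.comp (projCLM C)‖ * ‖y‖ := by
      calc ‖Q y‖ = ‖(Q.comp (projCLM C)) y‖ := by
            rw [ContinuousLinearMap.comp_apply, projCLM_apply_of_mem hyC]
        _ ≤ ‖Q.comp (projCLM C)‖ * ‖y‖ := ContinuousLinearMap.le_opNorm _ _
    rw [div_le_iff₀ (by positivity)]
    have hBnn : (0:ℝ) ≤ ‖Q.comp (projCLM C)‖ := norm_nonneg _
    have hQynn : (0:ℝ) ≤ ‖Q y‖ := norm_nonneg _
    rw [hAB]
    nlinarith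
  · -- d₂ < d₁ case
    have hE : Module.finrank ℝ (EuclideanSpace ℝ (Fin n)) = n := finrank_euclideanSpace_fin
    have horth : Module.finrank ℝ V + Module.finrank ℝ Vᗮ = n := by
      have := V.finrank_add_finrank_orthogonal
      rw [hE] at this
      exact this
    have hinf : C ⊓ Vᗮ ≠ ⊥ := by
      intro hbot
      have hsum := Submodule.finrank_sup_add_finrank_inf_eq C Vᗮ
      rw [hbot, finrank_bot, add_zero, hC1] at hsum
      have hle : Module.finrank ℝ ↥(C ⊔ Vᗮ) ≤ n := by
        have := Submodule.finrank_le (C ⊔ Vᗮ)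
        rw [hE] at this
        exact this
      omega
    obtain ⟨x, hxmem, hx0⟩ := Submodule.exists_mem_ne_zero_of_ne_bot hinf
    obtain ⟨hxC, hxV⟩ := Submodule.mem_inf.mp hxmem
    have hAx : ((projCLM C).comp Q) x = x := by
      rw [ContinuousLinearMap.comp_apply, Q_apply, projCLM_apply_of_mem_orthogonal hxV,
        sub_zero, projCLM_apply_of_mem hxC]
    have hxn : (0:ℝ) < ‖x‖ := norm_pos_iff.mpr hx0
    have hge : 1 ≤ ‖(projCLM C).comp Q‖ := by
      have h1 : ‖x‖ ≤ ‖(projCLM C).comp Q‖ * ‖x‖ := by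
        conv_lhs => rw [← hAx]
        exact ContinuousLinearMap.le_opNorm _ _
      exact le_of_mul_le_mul_right (by linarith) hxn
    have hle : ‖(projCLM C).comp Q‖ ≤ 1 := by
      calc ‖(projCLM C).comp Q‖ ≤ ‖projCLM C‖ * ‖Q‖ := ContinuousLinearMap.opNorm_comp_le _ _
        _ ≤ 1 * 1 := by
            have := projCLM_norm_le C
            have := Q_norm_le V
            have : (0:ℝ) ≤ ‖Q‖ := norm_nonneg _
            nlinarith [projCLM_norm_le C, Q_norm_le V, norm_nonneg (projCLM C)]
        _ = 1 := one_mul 1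
    rw [le_antisymm hle hge, one_pow]
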